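/- Completeness of minimal logic with respect to epistemic realizability: if M is a pure β-normalizing metaterm and ⟨A⟩(M^Γ) reduces to ⋆ (where M^Γ substitutes generators for variables declared in Γ), then the β-normal form M↓ of M is a well-typed term with Γ ⊢ M↓ : A in the simply typed lambda calculus. -/

import Mathlib

/-! The metacalculus λ→m for minimal logic: untyped λ-calculus extended with
a success constant ⋆, a guard construct (M; N), and generators ✠𝐚 / verifiers ⟨𝐚⟩
for atomic types. Terms use de Bruijn indices. -/

/-- Simple types: atomic types and arrows. -/
inductive Ty : Type
  | atom : ℕ → Ty
  | arrow : Ty → Ty → Ty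

/-- Metaterms of the metacalculus λ→m (de Bruijn indices). -/
inductive Tm : Type
  | var : ℕ → Tm
  | lam : Tm → Tm
  | app : Tm → Tm → Tm
  | star : Tm
  | guard : Tm → Tm → Tm
  | gen : ℕ → Tm
  | verif : ℕ → Tm → Tm

namespace Tm

/-- Shift de Bruijn indices ≥ c by d. -/
def shift (d c : ℕ) : Tm → Tm
  | var n => if n < c then var n else var (n + d)
  | lam M => lam (shift d (c+1) M)
  | app M N => app (shift d c M) (shift d c N)
  | star => star
  | guard M N => guard (shift d c M) (shift d c N)
  | gen a => gen a
  | verif a M => verif a (shift d c M)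

/-- Capture-avoiding substitution of the variable k by N. -/
def subst (k : ℕ) (N : Tm) : Tm → Tm
  | var n => if n = k then N else if k < n then var (n - 1) else var n
  | lam M => lam (subst (k+1) (shift 1 0 N) M)
  | app M P => app (subst k N M) (subst k N P)
  | star => star
  | guard M P => guard (subst k N M) (subst k N P)
  | gen a => gen a
  | verif a M => verif a (subst k N M)

/-- Pure metaterms: only variables, abstractions and applications. -/
def Pure : Tm → Prop
  | var _ => True
  | lam M => Pure M
  | app M N => Pure M ∧ Pure N
  | _ => False

end Tm

/-- One-step reduction of λ→m, closed under arbitrary contexts. -/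
inductive Step : Tm → Tm → Prop
  | beta (M N : Tm) : Step (.app (.lam M) N) (Tm.subst 0 N M)
  | guardStar (M : Tm) : Step (.guard .star M) M
  | verifGen (a : ℕ) : Step (.verif a (.gen a)) .star
  | lam {M M'} : Step M M' → Step (.lam M) (.lam M')
  | appL {M M'} (N) : Step M M' → Step (.app M N) (.app M' N)
  | appR {N N'} (M) : Step N N' → Step (.app M N) (.app M N')
  | guardL {M M'} (N) : Step M M' → Step (.guard M N) (.guard M' N)
  | guardR {N N'} (M) : Step N N' → Step (.guard M N) (.guard M N')
  | verif {M M'} (a) : Step M M' → Step (.verif a M) (.verif a M')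

/-- Weak head reduction of λ→m: the rules closed under weak head contexts only. -/
inductive WStep : Tm → Tm → Prop
  | beta (M N : Tm) : WStep (.app (.lam M) N) (Tm.subst 0 N M)
  | guardStar (M : Tm) : WStep (.guard .star M) M
  | verifGen (a : ℕ) : WStep (.verif a (.gen a)) .star
  | appL {M M'} (N) : WStep M M' → WStep (.app M N) (.app M' N)
  | guardL {M M'} (N) : WStep M M' → WStep (.guard M N) (.guard M' N)
  | verif {M M'} (a) : WStep M M' → WStep (.verif a M) (.verif a M')

/-- β-reduction alone, closed under arbitrary contexts. -/
inductive BStep : Tm → Tm → Prop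
  | beta (M N : Tm) : BStep (.app (.lam M) N) (Tm.subst 0 N M)
  | lam {M M'} : BStep M M' → BStep (.lam M) (.lam M')
  | appL {M M'} (N) : BStep M M' → BStep (.app M N) (.app M' N)
  | appR {N N'} (M) : BStep N N' → BStep (.app M N) (.app M N')
  | guardL {M M'} (N) : BStep M M' → BStep (.guard M N) (.guard M' N)
  | guardR {N N'} (M) : BStep N N' → BStep (.guard M N) (.guard M N')
  | verif {M M'} (a) : BStep M M' → BStep (.verif a M) (.verif a M')

mutual
/-- The generator ✠A for an arbitrary simple type A. -/
def genT : Ty → Tm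
  | .atom a => .gen a
  | .arrow A B => .lam (.guard (verifT A (.var 0)) (genT B))
/-- The verifier ⟨A⟩M for an arbitrary simple type A applied to M. -/
def verifT : Ty → Tm → Tm
  | .atom a, M => .verif a M
  | .arrow A B, M => verifT B (.app M (genT A))
end



/-- Parallel (simultaneous) substitution of all free variables. -/
def liftSub (σ : ℕ → Tm) : ℕ → Tm :=
  fun n => match n with
  | 0 => .var 0
  | n+1 => Tm.shift 1 0 (σ n)

def substPar (σ : ℕ → Tm) : Tm → Tm
  | .var n => σ n
  | .lam M => .lam (substPar (liftSub σ) M)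
  | .app M N => .app (substPar σ M) (substPar σ N)
  | .star => .star
  | .guard M N => .guard (substPar σ M) (substPar σ N)
  | .gen a => .gen a
  | .verif a M => .verif a (substPar σ M)

/-- Typing judgments of the simply typed λ-calculus (de Bruijn). -/
inductive Typing : List Ty → Tm → Ty → Prop
  | var {Γ : List Ty} {n : ℕ} {A : Ty} :
      Γ[n]? = some A → Typing Γ (.var n) A
  | lam {Γ : List Ty} {M : Tm} {A B : Ty} :
      Typing (A :: Γ) M B → Typing Γ (.lam M) (.arrow A B)
  | app {Γ : List Ty} {M N : Tm} {A B : Ty} :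
      Typing Γ M (.arrow A B) → Typing Γ N A → Typing Γ (.app M N) B

/-- The generative substitution for Γ: each free variable x:B ∈ Γ is replaced
by the generator ✠B. -/
def genSub (Γ : List Ty) : ℕ → Tm :=
  fun n => match Γ[n]? with
  | some A => genT A
  | none => .var n

namespace Tm

/-! ### shift / subst lemmas -/

theorem shift_shift (d d' : ℕ) {c c' : ℕ} (h : c' ≤ c) (M : Tm) :
    shift d (c + d') (shift d' c' M) = shift d' c' (shift d c M) := by
  induction M generalizing c c' with
  | var n =>
    simp only [shift]
    by_cases h1 : n < c'
    · simp [shift, h1, Nat.lt_of_lt_of_le h1 h,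
        Nat.lt_of_lt_of_le (Nat.lt_of_lt_of_le h1 h) (Nat.le_add_right _ _)]
    · by_cases h2 : n < c
      · have : n + d' < c + d' := by omega
        simp [shift, h1, h2, this]
      · have h3 : ¬ n + d' < c + d' := by omega
        have h4 : ¬ n + d < c' := by omega
        simp [shift, h1, h2, h3, h4]; omega
  | lam M ih =>
    simp only [shift]
    rw [show c + d' + 1 = (c+1) + d' by omega, ih (by omega)]
  | app M N ihM ihN => simp [shift, ihM h, ihN h]
  | star => simp [shift]
  | guard M N ihM ihN => simp [shift, ihM h, ihN h]
  | gen a => simp [shift]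
  | verif a M ih => simp [shift, ih h]

theorem subst_shift_cancel (k : ℕ) (N M : Tm) :
    subst k N (shift 1 k M) = M := by
  induction M generalizing k N with
  | var n =>
    simp only [shift]
    by_cases h : n < k
    · simp [subst, h, show n ≠ k by omega, show ¬ k < n by omega]
    · have h1 : ¬ n + 1 < k := by omega
      simp [subst, h, h1, show n + 1 ≠ k by omega, show k < n + 1 by omega]
  | lam M ih => simp [shift, subst, ih]
  | app M N ihM ihN => simp [shift, subst, ihM, ihN]
  | star => simp [shift, subst]
  | guard M N ihM ihN => simp [shift, subst, ihM, ihN]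
  | gen a => simp [shift, subst]
  | verif a M ih => simp [shift, subst, ih]

/-- shift past a subst (cut below substitution point). -/
theorem shift_subst_le (d : ℕ) {c k : ℕ} (h : k ≤ c) (N M : Tm) :
    shift d c (subst k N M) = subst k (shift d c N) (shift d (c+1) M) := by
  induction M generalizing c k N with
  | var n =>
    simp only [subst]
    by_cases h1 : n = k
    · subst h1; simp [shift, subst, show n < c + 1 by omega]
    · by_cases h2 : k < n
      · by_cases h3 : n < c + 1
        · have : n - 1 < c := by omega
          simp [shift, subst, h1, h2, h3, this]
        · have e1 : ¬ n - 1 < c := by omega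
          have e2 : n + d ≠ k := by omega
          have e3 : k < n + d := by omega
          simp [shift, subst, h1, h2, h3, e1, e2, e3]; omega
      · have h4 : n < c := by omega
        simp [shift, subst, h1, h2, h4, show n < c + 1 by omega]
  | lam M ih =>
    simp only [subst, shift]
    rw [ih (by omega)]
    rw [show shift d (c+1) (shift 1 0 N) = shift 1 0 (shift d c N) from
      shift_shift d 1 (Nat.zero_le c) N]
  | app M N ihM ihN => simp [shift, subst, ihM h, ihN h]
  | star => simp [shift, subst]
  | guard M N ihM ihN => simp [shift, subst, ihM h, ihN h]
  | gen a => simp [shift, subst]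
  | verif a M ih => simp [shift, subst, ih h]

/-- shift past a subst (cut at or below the substituted index). -/
theorem shift_subst_ge (d : ℕ) {c k : ℕ} (h : c ≤ k) (N M : Tm) :
    shift d c (subst k N M) = subst (k+d) (shift d c N) (shift d c M) := by
  induction M generalizing c k N with
  | var n =>
    simp only [subst]
    by_cases h1 : n = k
    · subst h1
      simp [shift, subst, show ¬ n < c by omega]
    · by_cases h2 : k < n
      · have e1 : ¬ n - 1 < c := by omega
        have e2 : ¬ n < c := by omega
        have e3 : n + d ≠ k + d := by omega
        have e4 : k + d < n + d := by omega
        simp [shift, subst, h1, h2, e1, e2, e3, e4]; omega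
      · by_cases h3 : n < c
        · simp [shift, subst, h1, h2, h3, show n ≠ k + d by omega,
            show ¬ k + d < n by omega]
        · simp [shift, subst, h1, h2, h3, show n + d ≠ k + d by omega,
            show ¬ k + d < n + d by omega]
  | lam M ih =>
    simp only [subst, shift]
    rw [ih (by omega)]
    rw [show shift 1 0 (shift d c N) = shift d (c+1) (shift 1 0 N) from
      (shift_shift d 1 (Nat.zero_le c) N).symm, show k + 1 + d = k + d + 1 by omega]
  | app M N ihM ihN => simp [shift, subst, ihM h, ihN h]
  | star => simp [shift, subst]
  | guard M N ihM ihN => simp [shift, subst, ihM h, ihN h]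
  | gen a => simp [shift, subst]
  | verif a M ih => simp [shift, subst, ih h]

end Tm
namespace Tm

/-! ### substPar lemmas -/

theorem substPar_congr {σ τ : ℕ → Tm} (h : ∀ n, σ n = τ n) (M : Tm) :
    substPar σ M = substPar τ M := by
  induction M generalizing σ τ with
  | var n => simpa [substPar] using h n
  | lam M ih =>
    simp only [substPar]
    exact congrArg Tm.lam (ih (σ := liftSub σ) (τ := liftSub τ)
      (fun n => by cases n with | zero => rfl | succ m => simp [liftSub, h m]))
  | app M N ihM ihN => simp [substPar, ihM h, ihN h]
  | star => simp [substPar]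
  | guard M N ihM ihN => simp [substPar, ihM h, ihN h]
  | gen a => simp [substPar]
  | verif a M ih => simp [substPar, ih h]

theorem substPar_shift (σ : ℕ → Tm) (d c : ℕ) (M : Tm) :
    substPar σ (shift d c M) = substPar (fun n => if n < c then σ n else σ (n + d)) M := by
  induction M generalizing σ c with
  | var n =>
    by_cases h : n < c <;> simp [shift, substPar, h]
  | lam M ih =>
    simp only [shift, substPar, ih]
    refine congrArg Tm.lam (substPar_congr (fun n => ?_) M)
    cases n with
    | zero => simp [liftSub]
    | succ m =>
      have e : m + 1 + d = (m + d) + 1 := by omega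
      by_cases h : m < c
      · simp [liftSub, h, show m + 1 < c + 1 by omega]
      · simp only [show ¬ m + 1 < c + 1 by omega, if_neg, ite_false, e]
        simp [liftSub, h]
  | app M N ihM ihN => simp [shift, substPar, ihM, ihN]
  | star => simp [shift, substPar]
  | guard M N ihM ihN => simp [shift, substPar, ihM, ihN]
  | gen a => simp [shift, substPar]
  | verif a M ih => simp [shift, substPar, ih]

theorem shift_substPar (d c : ℕ) (σ : ℕ → Tm) (M : Tm) :
    shift d c (substPar σ M) = substPar (fun n => shift d c (σ n)) M := by
  induction M generalizing σ c with
  | var n => simp [substPar]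
  | lam M ih =>
    simp only [substPar, shift, ih]
    rw [substPar_congr (τ := liftSub fun n => shift d c (σ n))]
    intro n
    cases n with
    | zero => simp [liftSub, shift]
    | succ m =>
      simp only [liftSub]
      exact (shift_shift d 1 (Nat.zero_le c) (σ m))
  | app M N ihM ihN => simp [shift, substPar, ihM, ihN]
  | star => simp [shift, substPar]
  | guard M N ihM ihN => simp [shift, substPar, ihM, ihN]
  | gen a => simp [shift, substPar]
  | verif a M ih => simp [shift, substPar, ih]

theorem subst_substPar (k : ℕ) (N : Tm) (σ : ℕ → Tm) (M : Tm) :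
    subst k N (substPar σ M) = substPar (fun n => subst k N (σ n)) M := by
  induction M generalizing σ k N with
  | var n => simp [substPar]
  | lam M ih =>
    simp only [substPar, subst, ih]
    rw [substPar_congr (τ := liftSub fun n => subst k N (σ n))]
    intro n
    cases n with
    | zero => simp [liftSub, subst]
    | succ m =>
      simp only [liftSub]
      exact (shift_subst_ge 1 (Nat.zero_le k) N (σ m)).symm
  | app M N ihM ihN => simp [subst, substPar, ihM, ihN]
  | star => simp [subst, substPar]
  | guard M N ihM ihN => simp [subst, substPar, ihM, ihN]
  | gen a => simp [subst, substPar]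
  | verif a M ih => simp [subst, substPar, ih]

theorem subst_as_substPar (k : ℕ) (N M : Tm) :
    subst k N M = substPar (fun n => if n < k then .var n else if n = k then N else .var (n-1)) M := by
  induction M generalizing k N with
  | var n =>
    by_cases h1 : n = k
    · simp [subst, substPar, h1]
    · by_cases h2 : k < n
      · simp [subst, substPar, h1, h2, show ¬ n < k by omega]
      · simp [subst, substPar, h1, h2, show n < k by omega]
  | lam M ih =>
    simp only [subst, substPar, ih]
    refine congrArg Tm.lam ?_
    apply substPar_congr
    intro n
    cases n with
    | zero => simp [liftSub, show (0:ℕ) < k + 1 by omega]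
    | succ m =>
      by_cases h1 : m < k
      · simp [liftSub, h1, show m + 1 < k + 1 by omega, shift]
      · by_cases h2 : m = k
        · simp [liftSub, h1, h2]
        · have : ¬ m + 1 < k + 1 := by omega
          have : m + 1 ≠ k + 1 := by omega
          simp [liftSub, h1, h2, shift, *]
          omega
  | app M N ihM ihN => simp [subst, substPar]; exact ⟨ihM _ _, ihN _ _⟩
  | star => simp [subst, substPar]
  | guard M N ihM ihN => simp [subst, substPar]; exact ⟨ihM _ _, ihN _ _⟩
  | gen a => simp [subst, substPar]
  | verif a M ih => simp [subst, substPar]; exact ih _ _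

theorem substPar_substPar (σ τ : ℕ → Tm) (M : Tm) :
    substPar σ (substPar τ M) = substPar (fun n => substPar σ (τ n)) M := by
  induction M generalizing σ τ with
  | var n => simp [substPar]
  | lam M ih =>
    simp only [substPar, ih]
    refine congrArg Tm.lam ?_
    apply substPar_congr
    intro n
    cases n with
    | zero => simp [liftSub, substPar]
    | succ m =>
      simp only [liftSub]
      rw [substPar_shift]
      rw [shift_substPar]
      apply substPar_congr
      intro n
      simp [liftSub]
  | app M N ihM ihN => simp [substPar, ihM, ihN]
  | star => simp [substPar]
  | guard M N ihM ihN => simp [substPar, ihM, ihN]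
  | gen a => simp [substPar]
  | verif a M ih => simp [substPar, ih]

/-- Key: substPar commutes with β-substitution. -/
theorem substPar_subst (σ : ℕ → Tm) (N M : Tm) :
    substPar σ (subst 0 N M) = subst 0 (substPar σ N) (substPar (liftSub σ) M) := by
  rw [subst_as_substPar 0 N M, substPar_substPar,
      subst_substPar 0 (substPar σ N) (liftSub σ) M]
  apply substPar_congr
  intro n
  cases n with
  | zero => simp [substPar, liftSub, subst]
  | succ m => simp [substPar, liftSub, subst_shift_cancel]

/-- Extend a parallel substitution by one term. -/
def consSub (N : Tm) (σ : ℕ → Tm) : ℕ → Tm :=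
  fun n => match n with | 0 => N | m+1 => σ m

theorem subst_substPar_cons (N : Tm) (σ : ℕ → Tm) (M : Tm) :
    subst 0 N (substPar (liftSub σ) M) = substPar (consSub N σ) M := by
  rw [subst_substPar]
  apply substPar_congr
  intro n
  cases n with
  | zero => simp [liftSub, subst, consSub]
  | succ m => simp [liftSub, subst_shift_cancel, consSub]

end Tm
open Tm in
/-- Parallel reduction. -/
inductive Par : Tm → Tm → Prop
  | var (n) : Par (.var n) (.var n)
  | star : Par .star .star
  | gen (a) : Par (.gen a) (.gen a)
  | lam {M M'} : Par M M' → Par (.lam M) (.lam M')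
  | app {M M' N N'} : Par M M' → Par N N' → Par (.app M N) (.app M' N')
  | guard {M M' N N'} : Par M M' → Par N N' → Par (.guard M N) (.guard M' N')
  | verif {M M'} (a) : Par M M' → Par (.verif a M) (.verif a M')
  | beta {M M' N N'} : Par M M' → Par N N' → Par (.app (.lam M) N) (Tm.subst 0 N' M')
  | guardStar {N N'} : Par N N' → Par (.guard .star N) N'
  | verifGen (a) : Par (.verif a (.gen a)) .star

theorem Par.refl (M : Tm) : Par M M := by
  induction M with
  | var n => exact Par.var n
  | lam M ih => exact Par.lam ih
  | app M N ihM ihN => exact Par.app ihM ihN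
  | star => exact Par.star
  | guard M N ihM ihN => exact Par.guard ihM ihN
  | gen a => exact Par.gen a
  | verif a M ih => exact Par.verif a ih

theorem Step.par {M N : Tm} (h : Step M N) : Par M N := by
  induction h with
  | beta M N => exact Par.beta (Par.refl M) (Par.refl N)
  | guardStar M => exact Par.guardStar (Par.refl M)
  | verifGen a => exact Par.verifGen a
  | lam _ ih => exact Par.lam ih
  | appL N _ ih => exact Par.app ih (Par.refl N)
  | appR M _ ih => exact Par.app (Par.refl M) ih
  | guardL N _ ih => exact Par.guard ih (Par.refl N)
  | guardR M _ ih => exact Par.guard (Par.refl M) ih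
  | verif a _ ih => exact Par.verif a ih

/-- Star congruence helpers for Step. -/
abbrev SStep := Relation.ReflTransGen Step

theorem SStep.lam {M M'} (h : SStep M M') : SStep (.lam M) (.lam M') :=
  Relation.ReflTransGen.lift _ (fun _ _ h => Step.lam h) _ _ h

theorem SStep.appL {M M'} (N) (h : SStep M M') : SStep (.app M N) (.app M' N) :=
  Relation.ReflTransGen.lift _ (fun _ _ h => Step.appL N h) _ _ h

theorem SStep.appR {N N'} (M) (h : SStep N N') : SStep (.app M N) (.app M N') :=
  Relation.ReflTransGen.lift _ (fun _ _ h => Step.appR M h) _ _ h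

theorem SStep.guardL {M M'} (N) (h : SStep M M') : SStep (.guard M N) (.guard M' N) :=
  Relation.ReflTransGen.lift _ (fun _ _ h => Step.guardL N h) _ _ h

theorem SStep.guardR {N N'} (M) (h : SStep N N') : SStep (.guard M N) (.guard M N') :=
  Relation.ReflTransGen.lift _ (fun _ _ h => Step.guardR M h) _ _ h

theorem SStep.verif {M M'} (a) (h : SStep M M') : SStep (.verif a M) (.verif a M') :=
  Relation.ReflTransGen.lift _ (fun _ _ h => Step.verif a h) _ _ h

theorem Par.sstep {M N : Tm} (h : Par M N) : SStep M N := by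
  induction h with
  | var n => exact .refl
  | star => exact .refl
  | gen a => exact .refl
  | lam _ ih => exact SStep.lam ih
  | app _ _ ihM ihN => exact .trans (SStep.appL _ ihM) (SStep.appR _ ihN)
  | guard _ _ ihM ihN => exact .trans (SStep.guardL _ ihM) (SStep.guardR _ ihN)
  | verif a _ ih => exact SStep.verif a ih
  | beta _ _ ihM ihN =>
    exact .trans (SStep.appL _ (SStep.lam ihM))
      (.trans (SStep.appR _ ihN) (.single (Step.beta _ _)))
  | guardStar _ ih => exact .head (Step.guardStar _) ih
  | verifGen a => exact .single (Step.verifGen a)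

theorem Par.shift {M M' : Tm} (h : Par M M') (d c : ℕ) :
    Par (Tm.shift d c M) (Tm.shift d c M') := by
  induction h generalizing c with
  | var n => exact Par.refl _
  | star => exact Par.star
  | gen a => exact Par.gen a
  | lam _ ih => exact Par.lam (ih _)
  | app _ _ ihM ihN => exact Par.app (ihM _) (ihN _)
  | guard _ _ ihM ihN => exact Par.guard (ihM _) (ihN _)
  | verif a _ ih => exact Par.verif a (ih _)
  | beta _ _ ihM ihN =>
    rw [Tm.shift_subst_le d (Nat.zero_le c)]
    exact Par.beta (ihM (c+1)) (ihN c)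
  | guardStar _ ih => exact Par.guardStar (ih _)
  | verifGen a => exact Par.verifGen a

theorem par_liftSub {σ τ : ℕ → Tm} (hστ : ∀ n, Par (σ n) (τ n)) :
    ∀ n, Par (liftSub σ n) (liftSub τ n) := by
  intro n
  cases n with
  | zero => exact Par.refl _
  | succ m => exact (hστ m).shift 1 0

theorem par_substPar {M M' : Tm} {σ τ : ℕ → Tm} (h : Par M M')
    (hστ : ∀ n, Par (σ n) (τ n)) :
    Par (substPar σ M) (substPar τ M') := by
  induction h generalizing σ τ with
  | var n => exact hστ n
  | star => exact Par.star
  | gen a => exact Par.gen a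
  | lam _ ih => exact Par.lam (ih (par_liftSub hστ))
  | app _ _ ihM ihN => exact Par.app (ihM hστ) (ihN hστ)
  | guard _ _ ihM ihN => exact Par.guard (ihM hστ) (ihN hστ)
  | verif a _ ih => exact Par.verif a (ih hστ)
  | beta _ _ ihM ihN =>
    rw [Tm.substPar_subst]
    exact Par.beta (ihM (par_liftSub hστ)) (ihN hστ)
  | guardStar _ ih => exact Par.guardStar (ih hστ)
  | verifGen a => exact Par.verifGen a

theorem Par.subst {M M' N N' : Tm} (hM : Par M M') (hN : Par N N') :
    Par (Tm.subst 0 N M) (Tm.subst 0 N' M') := by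
  rw [Tm.subst_as_substPar, Tm.subst_as_substPar]
  apply par_substPar hM
  intro n
  cases n with
  | zero => simpa using hN
  | succ m =>
    simp only [Nat.not_lt_zero, if_false, Nat.succ_ne_zero, Nat.add_sub_cancel, ite_false]
    exact Par.refl _

/-- Complete development. -/
def cd : Tm → Tm
  | .var n => .var n
  | .star => .star
  | .gen a => .gen a
  | .lam M => .lam (cd M)
  | .app (.lam M) N => Tm.subst 0 (cd N) (cd M)
  | .app (.var n) N => .app (.var n) (cd N)
  | .app .star N => .app .star (cd N)
  | .app (.gen a) N => .app (.gen a) (cd N)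
  | .app (.app M1 M2) N => .app (cd (.app M1 M2)) (cd N)
  | .app (.guard M1 M2) N => .app (cd (.guard M1 M2)) (cd N)
  | .app (.verif a M1) N => .app (cd (.verif a M1)) (cd N)
  | .guard .star N => cd N
  | .guard (.var n) N => .guard (.var n) (cd N)
  | .guard (.lam M) N => .guard (cd (.lam M)) (cd N)
  | .guard (.app M1 M2) N => .guard (cd (.app M1 M2)) (cd N)
  | .guard (.guard M1 M2) N => .guard (cd (.guard M1 M2)) (cd N)
  | .guard (.gen a) N => .guard (.gen a) (cd N)
  | .guard (.verif a M1) N => .guard (cd (.verif a M1)) (cd N)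
  | .verif a (.gen b) => if a = b then .star else .verif a (.gen b)
  | .verif a (.var n) => .verif a (.var n)
  | .verif a .star => .verif a .star
  | .verif a (.lam M) => .verif a (cd (.lam M))
  | .verif a (.app M1 M2) => .verif a (cd (.app M1 M2))
  | .verif a (.guard M1 M2) => .verif a (cd (.guard M1 M2))
  | .verif a (.verif b M) => .verif a (cd (.verif b M))

theorem par_cd {M N : Tm} (h : Par M N) : Par N (cd M) := by
  induction h with
  | var n => exact Par.refl _
  | star => exact Par.star
  | gen a => exact Par.gen a
  | lam _ ih => exact Par.lam ih
  | app hM hN ihM ihN =>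
    rename_i M M' N N'
    cases M with
    | lam M0 =>
      cases hM with
      | lam hM0 =>
        cases ihM with
        | lam ih0 => exact Par.beta ih0 ihN
    | var n => exact Par.app ihM ihN
    | star => exact Par.app ihM ihN
    | gen a => exact Par.app ihM ihN
    | app _ _ => exact Par.app ihM ihN
    | guard _ _ => exact Par.app ihM ihN
    | verif _ _ => exact Par.app ihM ihN
  | guard hM hN ihM ihN =>
    rename_i M M' N N'
    cases M with
    | star =>
      cases hM
      exact Par.guardStar ihN
    | var n => exact Par.guard ihM ihN
    | lam _ => exact Par.guard ihM ihN
    | gen a => exact Par.guard ihM ihN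
    | app _ _ => exact Par.guard ihM ihN
    | guard _ _ => exact Par.guard ihM ihN
    | verif _ _ => exact Par.guard ihM ihN
  | verif a hM ih =>
    rename_i M M'
    cases M with
    | gen b =>
      cases hM
      by_cases hab : a = b
      · subst hab; simp only [cd, if_pos rfl]; exact Par.verifGen a
      · simp only [cd, if_neg hab]; exact Par.verif a (Par.refl _)
    | var n => exact Par.verif a ih
    | star => exact Par.verif a ih
    | lam _ => exact Par.verif a ih
    | app _ _ => exact Par.verif a ih
    | guard _ _ => exact Par.verif a ih
    | verif _ _ => exact Par.verif a ih
  | beta _ _ ihM ihN => exact Par.subst ihM ihN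
  | guardStar _ ih => exact ih
  | verifGen a => simp only [cd, if_pos rfl]; exact Par.star

theorem par_diamond : ∀ {M N1 N2 : Tm}, Par M N1 → Par M N2 →
    ∃ P, Par N1 P ∧ Par N2 P :=
  fun h1 h2 => ⟨cd _, par_cd h1, par_cd h2⟩

theorem sstep_iff_parStar {M N : Tm} :
    SStep M N ↔ Relation.ReflTransGen Par M N := by
  constructor
  · exact Relation.ReflTransGen.mono (fun _ _ h => Step.par h) _ _
  · intro h
    induction h with
    | refl => exact .refl
    | tail _ hp ih => exact ih.trans hp.sstep

theorem sstep_confluent {M N1 N2 : Tm} (h1 : SStep M N1) (h2 : SStep M N2) :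
    ∃ P, SStep N1 P ∧ SStep N2 P := by
  rw [sstep_iff_parStar] at h1 h2
  have := Relation.church_rosser
    (r := Par)
    (fun a b c hb hc => by
      obtain ⟨d, hd1, hd2⟩ := par_diamond hb hc
      exact ⟨d, .single hd1, .single hd2⟩) h1 h2
  obtain ⟨d, hd1, hd2⟩ := this
  exact ⟨d, sstep_iff_parStar.2 hd1, sstep_iff_parStar.2 hd2⟩

theorem star_normal : ∀ {N : Tm}, ¬ Step Tm.star N := fun h => by cases h
theorem gen_normal {a : ℕ} : ∀ {N : Tm}, ¬ Step (Tm.gen a) N := fun h => by cases h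
theorem var_normal {n : ℕ} : ∀ {N : Tm}, ¬ Step (Tm.var n) N := fun h => by cases h

theorem sstep_of_normal {M N : Tm} (hM : ∀ P, ¬ Step M P) (h : SStep M N) : N = M := by
  induction h using Relation.ReflTransGen.head_induction_on with
  | refl => rfl
  | head hs _ _ => exact absurd hs (hM _)

/-- If M reduces to a Step-normal form T and also M → M', then M' still reduces to T. -/
theorem sstep_to_nf_of_step {M M' T : Tm} (hT : ∀ P, ¬ Step T P)
    (h : SStep M T) (hs : Step M M') : SStep M' T := by
  obtain ⟨P, hP1, hP2⟩ := sstep_confluent h (Relation.ReflTransGen.single hs)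
  rwa [sstep_of_normal hT hP1] at hP2

/-! ### Inversion of reduction sequences -/

theorem lam_inv' : ∀ {X T : Tm}, SStep X T → ∀ {M : Tm}, X = .lam M →
    ∃ M', T = .lam M' ∧ SStep M M' := by
  intro X T h
  induction h using Relation.ReflTransGen.head_induction_on with
  | refl => intro M hM; exact ⟨M, hM, .refl⟩
  | head hs _ ih =>
    rintro M rfl
    cases hs with
    | lam h1 => obtain ⟨M', rfl, h2⟩ := ih rfl; exact ⟨M', rfl, .head h1 h2⟩

theorem lam_inv {M T : Tm} (h : SStep (.lam M) T) :
    ∃ M', T = .lam M' ∧ SStep M M' := lam_inv' h rfl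

theorem guard_inv' : ∀ {X T : Tm}, SStep X T → ∀ {G H : Tm}, X = .guard G H →
    (∃ G' H', T = .guard G' H' ∧ SStep G G' ∧ SStep H H') ∨
    (SStep G .star ∧ SStep H T) := by
  intro X T h
  induction h using Relation.ReflTransGen.head_induction_on with
  | refl => rintro G H rfl; exact .inl ⟨G, H, rfl, .refl, .refl⟩
  | @head X Y hs hY ih =>
    rintro G H rfl
    cases hs with
    | guardStar => exact .inr ⟨.refl, hY⟩
    | guardL _ h1 =>
      rcases ih rfl with ⟨G', H', rfl, h2, h3⟩ | ⟨h2, h3⟩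
      · exact .inl ⟨G', H', rfl, .head h1 h2, h3⟩
      · exact .inr ⟨.head h1 h2, h3⟩
    | guardR _ h1 =>
      rcases ih rfl with ⟨G', H', rfl, h2, h3⟩ | ⟨h2, h3⟩
      · exact .inl ⟨G', H', rfl, h2, .head h1 h3⟩
      · exact .inr ⟨h2, .head h1 h3⟩

theorem guard_inv {G H T : Tm} (h : SStep (.guard G H) T) :
    (∃ G' H', T = .guard G' H' ∧ SStep G G' ∧ SStep H H') ∨
    (SStep G .star ∧ SStep H T) := guard_inv' h rfl

theorem verif_inv' : ∀ {X T : Tm}, SStep X T → ∀ {a : ℕ} {M : Tm}, X = .verif a M →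
    (∃ M', T = .verif a M' ∧ SStep M M') ∨ (SStep M (.gen a) ∧ T = .star) := by
  intro X T h
  induction h using Relation.ReflTransGen.head_induction_on with
  | refl => rintro a M rfl; exact .inl ⟨M, rfl, .refl⟩
  | @head X Y hs hY ih =>
    rintro a M rfl
    cases hs with
    | verifGen => exact .inr ⟨.refl, sstep_of_normal (fun _ => star_normal) hY⟩
    | verif _ h1 =>
      rcases ih rfl with ⟨M', rfl, h2⟩ | ⟨h2, h3⟩
      · exact .inl ⟨M', rfl, .head h1 h2⟩
      · exact .inr ⟨.head h1 h2, h3⟩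

theorem verif_inv {a : ℕ} {M T : Tm} (h : SStep (.verif a M) T) :
    (∃ M', T = .verif a M' ∧ SStep M M') ∨ (SStep M (.gen a) ∧ T = .star) :=
  verif_inv' h rfl

theorem app_inv' : ∀ {X T : Tm}, SStep X T → ∀ {M N : Tm}, X = .app M N →
    (∃ M' N', T = .app M' N' ∧ SStep M M' ∧ SStep N N') ∨
    (∃ M0 N', SStep M (.lam M0) ∧ SStep N N' ∧ SStep (Tm.subst 0 N' M0) T) := by
  intro X T h
  induction h using Relation.ReflTransGen.head_induction_on with
  | refl => rintro M N rfl; exact .inl ⟨M, N, rfl, .refl, .refl⟩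
  | @head X Y hs hY ih =>
    rintro M N rfl
    cases hs with
    | beta M0 => exact .inr ⟨M0, N, .refl, .refl, hY⟩
    | appL _ h1 =>
      rcases ih rfl with ⟨M', N', rfl, h2, h3⟩ | ⟨M0, N', h2, h3, h4⟩
      · exact .inl ⟨M', N', rfl, .head h1 h2, h3⟩
      · exact .inr ⟨M0, N', .head h1 h2, h3, h4⟩
    | appR _ h1 =>
      rcases ih rfl with ⟨M', N', rfl, h2, h3⟩ | ⟨M0, N', h2, h3, h4⟩
      · exact .inl ⟨M', N', rfl, h2, .head h1 h3⟩
      · exact .inr ⟨M0, N', h2, .head h1 h3, h4⟩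

theorem app_inv {M N T : Tm} (h : SStep (.app M N) T) :
    (∃ M' N', T = .app M' N' ∧ SStep M M' ∧ SStep N N') ∨
    (∃ M0 N', SStep M (.lam M0) ∧ SStep N N' ∧ SStep (Tm.subst 0 N' M0) T) :=
  app_inv' h rfl

/-! ### Application spines -/

def apps : Tm → List Tm → Tm
  | X, [] => X
  | X, Q :: Qs => apps (.app X Q) Qs

theorem apps_congL {X X' : Tm} (Qs : List Tm) (h : SStep X X') :
    SStep (apps X Qs) (apps X' Qs) := by
  induction Qs generalizing X X' with
  | nil => exact h
  | cons Q Qs ih => exact ih (SStep.appL Q h)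

theorem apps_congL_step {X X' : Tm} (Qs : List Tm) (h : Step X X') :
    Step (apps X Qs) (apps X' Qs) := by
  induction Qs generalizing X X' with
  | nil => exact h
  | cons Q Qs ih => exact ih (Step.appL Q h)

theorem spine_inv {c : ℕ} : ∀ (Qs : List Tm) (X : Tm),
    SStep (apps X Qs) (.gen c) →
    (Qs = [] ∧ SStep X (.gen c)) ∨
    (∃ Q Qs' X' Q', Qs = Q :: Qs' ∧ SStep X (.lam X') ∧ SStep Q Q' ∧
      SStep (apps (Tm.subst 0 Q' X') Qs') (.gen c)) := by
  intro Qs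
  induction Qs with
  | nil => intro X h; exact .inl ⟨rfl, h⟩
  | cons Q Qs ih =>
    intro X h
    rcases ih (.app X Q) h with ⟨rfl, h1⟩ | ⟨R, Qs', Y, R', rfl, h1, h2, h3⟩
    · rcases app_inv h1 with ⟨M', N', he, _, _⟩ | ⟨M0, N', h2, h3, h4⟩
      · cases he
      · exact .inr ⟨Q, [], M0, N', rfl, h2, h3, h4⟩
    · rcases app_inv h1 with ⟨M', N', he, _, _⟩ | ⟨M0, N', h4, h5, h6⟩
      · cases he
      · refine .inr ⟨Q, R :: Qs', M0, N', rfl, h4, h5, ?_⟩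
        have s1 : SStep (apps (Tm.subst 0 N' M0) (R :: Qs')) (apps (.lam Y) (R :: Qs')) :=
          apps_congL _ h6
        have s2 : SStep (apps (.app (.lam Y) R) Qs') (apps (.app (.lam Y) R') Qs') :=
          apps_congL _ (SStep.appR _ h2)
        have s3 : Step (apps (.app (.lam Y) R') Qs') (apps (Tm.subst 0 R' Y) Qs') :=
          apps_congL_step _ (Step.beta Y R')
        exact s1.trans (s2.trans (Relation.ReflTransGen.head s3 h3))

theorem guard_spine {c : ℕ} {G H : Tm} (Qs : List Tm)
    (h : SStep (apps (.guard G H) Qs) (.gen c)) :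
    SStep G .star ∧ SStep (apps H Qs) (.gen c) := by
  rcases spine_inv Qs _ h with ⟨rfl, h1⟩ | ⟨Q, Qs', X', Q', rfl, h1, h2, h3⟩
  · rcases guard_inv h1 with ⟨G', H', he, _, _⟩ | ⟨h2, h3⟩
    · cases he
    · exact ⟨h2, h3⟩
  · rcases guard_inv h1 with ⟨G', H', he, _, _⟩ | ⟨h4, h5⟩
    · cases he
    · refine ⟨h4, ?_⟩
      have s1 : SStep (apps (.app H Q) Qs') (apps (.app (.lam X') Q') Qs') :=
        apps_congL _ ((SStep.appL Q h5).trans (SStep.appR _ h2))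
      have s2 : Step (apps (.app (.lam X') Q') Qs') (apps (Tm.subst 0 Q' X') Qs') :=
        apps_congL_step _ (Step.beta X' Q')
      exact s1.trans (Relation.ReflTransGen.head s2 h3)

/-! ### Facts about genT and verifT -/

def tailTy : Ty → ℕ
  | .atom a => a
  | .arrow _ B => tailTy B

def argTys : Ty → List Ty
  | .atom _ => []
  | .arrow A B => A :: argTys B

theorem ty_eta : ∀ A : Ty, (argTys A).foldr Ty.arrow (Ty.atom (tailTy A)) = A
  | .atom a => rfl
  | .arrow A B => by simp [argTys, tailTy, ty_eta B]

theorem verifT_eq : ∀ (C : Ty) (M : Tm),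
    verifT C M = .verif (tailTy C) (apps M ((argTys C).map genT))
  | .atom a, M => rfl
  | .arrow A B, M => by
    simp [verifT, tailTy, argTys, verifT_eq B, apps]

/-- Neutral terms: a variable applied to normal arguments. -/
inductive Neu : Tm → Prop
  | var (n) : Neu (.var n)
  | app {X Y} : Neu X → (∀ T, ¬ Step Y T) → Neu (.app X Y)

theorem Neu.normal {X : Tm} (h : Neu X) : ∀ T, ¬ Step X T := by
  induction h with
  | var n => exact fun _ => var_normal
  | app hX hY ihX =>
    intro T hT
    cases hT with
    | beta M N => cases hX
    | appL _ h1 => exact ihX _ h1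
    | appR _ h1 => exact hY _ h1

theorem genT_shape : ∀ C : Ty, (∃ a, genT C = .gen a) ∨ (∃ B, genT C = .lam B)
  | .atom a => .inl ⟨a, rfl⟩
  | .arrow A B => .inr ⟨_, rfl⟩

/-- genT is normal; verifT of a neutral non-generator is normal. -/
theorem genT_normal_aux : ∀ C : Ty,
    (∀ T, ¬ Step (genT C) T) ∧
    (∀ X, Neu X → ∀ T, ¬ Step (verifT C X) T) := by
  intro C
  induction C with
  | atom a =>
    constructor
    · exact fun _ => gen_normal
    · intro X hX T hT
      cases hT with
      | verifGen => cases hX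
      | verif _ h1 => exact hX.normal _ h1
  | arrow A B ihA ihB =>
    constructor
    · intro T hT
      have hv := verifT_eq A (.var 0)
      cases hT with
      | lam h1 =>
        rw [hv] at h1
        cases h1 with
        | guardL _ h2 =>
          rw [← hv] at h2
          exact ihA.2 _ (Neu.var 0) _ h2
        | guardR _ h2 => exact ihB.1 _ h2
    · intro X hX T hT
      exact ihB.2 _ (Neu.app hX ihA.1) _ hT

theorem genT_normal (C : Ty) : ∀ T, ¬ Step (genT C) T := (genT_normal_aux C).1

theorem genT_body_normal (A B : Ty) :
    ∀ T, ¬ Step (.guard (verifT A (.var 0)) (genT B)) T := by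
  intro T hT
  exact genT_normal (.arrow A B) _ (Step.lam hT)

/-- genT is closed. -/
theorem shift_verifT_genT : ∀ C : Ty,
    (∀ d c, Tm.shift d c (genT C) = genT C) ∧
    (∀ d c M, Tm.shift d c (verifT C M) = verifT C (Tm.shift d c M)) := by
  intro C
  induction C with
  | atom a => exact ⟨fun d c => rfl, fun d c M => rfl⟩
  | arrow A B ihA ihB =>
    constructor
    · intro d c
      show Tm.lam _ = _
      simp only [genT, Tm.shift]
      rw [ihA.2, ihB.1]
      simp [Tm.shift]
    · intro d c M
      show Tm.shift d c (verifT B (.app M (genT A))) = _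
      rw [ihB.2]
      simp only [Tm.shift]
      rw [ihA.1]
      rfl

theorem subst_verifT_genT : ∀ C : Ty,
    (∀ k N, Tm.subst k N (genT C) = genT C) ∧
    (∀ k N M, Tm.subst k N (verifT C M) = verifT C (Tm.subst k N M)) := by
  intro C
  induction C with
  | atom a => exact ⟨fun k N => rfl, fun k N M => rfl⟩
  | arrow A B ihA ihB =>
    constructor
    · intro k N
      show Tm.lam _ = _
      simp only [genT, Tm.subst]
      rw [ihA.2, ihB.1]
      simp [Tm.subst]
    · intro k N M
      show Tm.subst k N (verifT B (.app M (genT A))) = _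
      rw [ihB.2]
      simp only [Tm.subst]
      rw [ihA.1]
      rfl

/-! ### Realizability -/

def Rz (A : Ty) (M : Tm) : Prop := SStep (verifT A M) Tm.star

theorem real_iff {A : Ty} {M : Tm} :
    Rz A M ↔ SStep (apps M ((argTys A).map genT)) (.gen (tailTy A)) := by
  rw [Rz, verifT_eq]
  constructor
  · intro h
    rcases verif_inv h with ⟨M', he, _⟩ | ⟨h1, _⟩
    · cases he
    · exact h1
  · intro h
    exact (SStep.verif _ h).trans (Relation.ReflTransGen.single (Step.verifGen _))

theorem real_step {A : Ty} {M M' : Tm} (h : Rz A M) (hs : Step M M') : Rz A M' := by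
  rw [Rz, verifT_eq] at h ⊢
  exact sstep_to_nf_of_step (fun _ => star_normal)
    h (Step.verif _ (apps_congL_step _ hs))

theorem real_sstep_arg {A : Ty} {M M' : Tm} (hs : SStep M M') (h : Rz A M') : Rz A M := by
  rw [Rz, verifT_eq] at h ⊢
  exact ((SStep.verif _ (apps_congL _ hs)).trans h)

theorem real_arrow {A B : Ty} {M : Tm} :
    Rz (.arrow A B) M ↔ Rz B (.app M (genT A)) := Iff.rfl

/-! ### Spines headed by generators -/

inductive Follows : Ty → List Tm → ℕ → Prop
  | nil (c) : Follows (.atom c) [] c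
  | cons {A B : Ty} {Q : Tm} {Qs : List Tm} {c : ℕ} :
      Rz A Q → Follows B Qs c → Follows (.arrow A B) (Q :: Qs) c

theorem var_spine {m c : ℕ} {Qs : List Tm} (h : SStep (apps (.var m) Qs) (.gen c)) :
    False := by
  rcases spine_inv Qs _ h with ⟨rfl, h1⟩ | ⟨Q, Qs', X', Q', rfl, h1, h2, h3⟩
  · have := sstep_of_normal (fun _ => var_normal) h1
    cases this
  · have := sstep_of_normal (fun _ => var_normal) h1
    cases this

theorem gen_spine : ∀ (B : Ty) (Qs : List Tm) (c : ℕ),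
    SStep (apps (genT B) Qs) (.gen c) → Follows B Qs c := by
  intro B
  induction B with
  | atom a =>
    intro Qs c h
    rcases spine_inv Qs _ h with ⟨rfl, h1⟩ | ⟨Q, Qs', X', Q', rfl, h1, h2, h3⟩
    · have e := sstep_of_normal (fun _ => gen_normal) h1
      injection e with e'
      cases e'
      exact Follows.nil _
    · have e := sstep_of_normal (fun _ => gen_normal) h1
      cases e
  | arrow A1 B2 ihA ihB =>
    intro Qs c h
    rcases spine_inv Qs _ h with ⟨rfl, h1⟩ | ⟨Q, Qs', X', Q', rfl, h1, h2, h3⟩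
    · obtain ⟨M', he, _⟩ := lam_inv (show SStep (.lam (.guard (verifT A1 (.var 0)) (genT B2))) _ from h1)
      cases he
    · have e := sstep_of_normal (genT_normal _) h1
      have eX : X' = .guard (verifT A1 (.var 0)) (genT B2) := by
        have : Tm.lam X' = Tm.lam (.guard (verifT A1 (.var 0)) (genT B2)) := e
        injection this
      subst eX
      have hsub : Tm.subst 0 Q' (Tm.guard (verifT A1 (.var 0)) (genT B2))
          = .guard (verifT A1 Q') (genT B2) := by
        show Tm.guard (Tm.subst 0 Q' (verifT A1 (.var 0))) (Tm.subst 0 Q' (genT B2)) = _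
        rw [(subst_verifT_genT A1).2, (subst_verifT_genT B2).1]
        norm_num [Tm.subst]
      rw [hsub] at h3
      obtain ⟨hG, hH⟩ := guard_spine Qs' h3
      exact Follows.cons (real_sstep_arg h2 hG) (ihB Qs' c hH)

theorem argTys_size {Q A : Ty} (h : Q ∈ argTys A) : sizeOf Q < sizeOf A := by
  induction A with
  | atom a => simp [argTys] at h
  | arrow A B ihA ihB =>
    rcases (by simpa [argTys] using h : Q = A ∨ Q ∈ argTys B) with rfl | h2
    · simp; omega
    · have := ihB h2; simp; omega

theorem ty_sizeOf_pos (A : Ty) : 0 < sizeOf A := by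
  cases A <;> simp

theorem gen_real : ∀ (A B : Ty), Rz A (genT B) → A = B := by
  have key : ∀ k (A B : Ty), sizeOf A + sizeOf B ≤ k → Rz A (genT B) → A = B := by
    intro k
    induction k with
    | zero =>
      intro A B hsz _
      have := ty_sizeOf_pos A
      omega
    | succ k ih =>
      intro A B hsz h
      have hf : Follows B ((argTys A).map genT) (tailTy A) :=
        gen_spine B _ _ (real_iff.mp h)
      suffices haux : ∀ (B' : Ty) (As : List Ty) (c : ℕ), sizeOf B' ≤ sizeOf B →
          (∀ Q ∈ As, sizeOf Q < sizeOf A) → Follows B' (As.map genT) c →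
          B' = As.foldr Ty.arrow (.atom c) by
        have hB := haux B (argTys A) (tailTy A) le_rfl (fun Q hQ => argTys_size hQ) hf
        exact (hB.trans (ty_eta A)).symm
      intro B' As
      induction As generalizing B' with
      | nil =>
        intro c _ _ hf'
        cases hf'
        rfl
      | cons Q As' ihAs =>
        intro c hB hQs hf'
        cases hf' with
        | cons hr hf2 =>
          rename_i D B2
          have hB' : sizeOf D + sizeOf B2 < sizeOf B := by
            simp only [Ty.arrow.sizeOf_spec] at hB
            omega
          have hD : D = Q := by
            refine ih D Q ?_ hr
            have hQ := hQs Q (List.mem_cons_self)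
            omega
          have hB2 := ihAs B2 c (by omega) (fun R hR => hQs R (List.mem_cons_of_mem _ hR)) hf2
          rw [hD, hB2]
          rfl
  exact fun A B => key (sizeOf A + sizeOf B) A B le_rfl

theorem follows_gen : ∀ (B : Ty) (As : List Ty) (c : ℕ),
    Follows B (As.map genT) c → B = As.foldr Ty.arrow (.atom c) := by
  intro B As
  induction As generalizing B with
  | nil => intro c hf; cases hf; rfl
  | cons Q As' ih =>
    intro c hf
    cases hf with
    | cons hr hf' => rw [gen_real _ _ hr, ih _ _ hf']; rfl

/-! ### Good substitutions and the main induction -/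

def GoodSub (Γ : List Ty) (σ : ℕ → Tm) : Prop :=
  ∀ n, (∀ B, Γ[n]? = some B → σ n = genT B) ∧ (Γ[n]? = none → ∃ m, σ n = .var m)

theorem good_genSub (Γ : List Ty) : GoodSub Γ (genSub Γ) := by
  intro n
  constructor
  · intro B hB; simp only [genSub]; rw [hB]
  · intro hB; exact ⟨n, by simp only [genSub]; rw [hB]⟩

theorem good_cons {Γ : List Ty} {σ : ℕ → Tm} (A : Ty) (h : GoodSub Γ σ) :
    GoodSub (A :: Γ) (Tm.consSub (genT A) σ) := by
  intro n
  cases n with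
  | zero =>
    constructor
    · intro B hB
      simp at hB
      rw [← hB]
      rfl
    · intro hB; simp at hB
  | succ m =>
    constructor
    · intro B hB
      simp at hB
      exact (h m).1 B (by simpa using hB)
    · intro hB
      simp at hB
      exact (h m).2 (by simpa using hB)

theorem main_lemma : ∀ (k : ℕ) (M : Tm), sizeOf M ≤ k → Tm.Pure M →
    (∀ N, ¬ BStep M N) →
    ((∀ (Γ : List Ty) (σ : ℕ → Tm) (Qs : List Tm) (c : ℕ), GoodSub Γ σ →
        ((∃ n, M = .var n) ∨ (∃ P Q, M = .app P Q)) →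
        SStep (apps (substPar σ M) Qs) (.gen c) → ∃ B, Typing Γ M B ∧ Follows B Qs c)
     ∧ (∀ (Γ : List Ty) (σ : ℕ → Tm) (A : Ty), GoodSub Γ σ →
        Rz A (substPar σ M) → Typing Γ M A)) := by
  intro k
  induction k with
  | zero =>
    intro M hsz
    exfalso
    cases M <;> simp at hsz
  | succ k ih =>
    intro M hsz hpure hnf
    have aux : ∀ (Γ : List Ty) (σ : ℕ → Tm) (Qs : List Tm) (c : ℕ), GoodSub Γ σ →
        ((∃ n, M = .var n) ∨ (∃ P Q, M = .app P Q)) →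
        SStep (apps (substPar σ M) Qs) (.gen c) → ∃ B, Typing Γ M B ∧ Follows B Qs c := by
      intro Γ σ Qs c hσ hshape h
      rcases hshape with ⟨n, rfl⟩ | ⟨P, Q, rfl⟩
      · obtain ⟨hsome, hnone⟩ := hσ n
        cases hget : Γ[n]? with
        | some B =>
          rw [show substPar σ (.var n) = σ n from rfl, hsome B hget] at h
          exact ⟨B, Typing.var hget, gen_spine B Qs c h⟩
        | none =>
          obtain ⟨m, hm⟩ := hnone hget
          rw [show substPar σ (.var n) = σ n from rfl, hm] at h
          exact absurd h (fun h' => var_spine h')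
      · have hp := hpure
        simp only [Tm.Pure] at hp
        have hnfP : ∀ N, ¬ BStep P N := fun N hN => hnf _ (BStep.appL _ hN)
        have hnfQ : ∀ N, ¬ BStep Q N := fun N hN => hnf _ (BStep.appR _ hN)
        have hPshape : (∃ n, P = .var n) ∨ ∃ P1 P2, P = .app P1 P2 := by
          cases P with
          | var n => exact .inl ⟨n, rfl⟩
          | app P1 P2 => exact .inr ⟨P1, P2, rfl⟩
          | lam M0 => exact absurd (BStep.beta M0 Q) (hnf _)
          | star => simp [Tm.Pure] at hp
          | guard _ _ => simp [Tm.Pure] at hp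
          | gen _ => simp [Tm.Pure] at hp
          | verif _ _ => simp [Tm.Pure] at hp
        have hsizeP : sizeOf P ≤ k := by simp at hsz; omega
        have hsizeQ : sizeOf Q ≤ k := by simp at hsz; omega
        have h' : SStep (apps (substPar σ P) (substPar σ Q :: Qs)) (.gen c) := h
        obtain ⟨B, tyP, fol⟩ :=
          (ih P hsizeP hp.1 hnfP).1 Γ σ (substPar σ Q :: Qs) c hσ hPshape h'
        cases fol with
        | cons hr fol' =>
          rename_i A1 B2
          have tyQ := (ih Q hsizeQ hp.2 hnfQ).2 Γ σ A1 hσ hr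
          exact ⟨B2, Typing.app tyP tyQ, fol'⟩
    refine ⟨aux, ?_⟩
    intro Γ σ A hσ h
    cases M with
    | var n =>
      obtain ⟨B, ty, fol⟩ := aux Γ σ _ _ hσ (.inl ⟨n, rfl⟩) (real_iff.mp h)
      rwa [(follows_gen B (argTys A) (tailTy A) fol).trans (ty_eta A)] at ty
    | app P Q =>
      obtain ⟨B, ty, fol⟩ := aux Γ σ _ _ hσ (.inr ⟨P, Q, rfl⟩) (real_iff.mp h)
      rwa [(follows_gen B (argTys A) (tailTy A) fol).trans (ty_eta A)] at ty
    | lam M0 =>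
      cases A with
      | atom a =>
        exfalso
        rcases verif_inv (show SStep (.verif a (.lam (substPar (liftSub σ) M0))) .star from h)
          with ⟨M', he, _⟩ | ⟨h1, _⟩
        · cases he
        · obtain ⟨M', he, _⟩ := lam_inv h1
          cases he
      | arrow A1 A2 =>
        have hstep : Step (.app (.lam (substPar (liftSub σ) M0)) (genT A1))
            (substPar (Tm.consSub (genT A1) σ) M0) := by
          rw [← Tm.subst_substPar_cons]
          exact Step.beta _ _
        have h2 : Rz A2 (substPar (Tm.consSub (genT A1) σ) M0) :=
          real_step (show Rz A2 (.app (.lam (substPar (liftSub σ) M0)) (genT A1)) from h) hstep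
        have hszM0 : sizeOf M0 ≤ k := by simp at hsz; omega
        have hpM0 : Tm.Pure M0 := by simpa [Tm.Pure] using hpure
        exact Typing.lam
          ((ih M0 hszM0 hpM0 (fun N hN => hnf _ (BStep.lam hN))).2 (A1 :: Γ) _ A2
            (good_cons A1 hσ) h2)
    | star => simp [Tm.Pure] at hpure
    | guard _ _ => simp [Tm.Pure] at hpure
    | gen _ => simp [Tm.Pure] at hpure
    | verif _ _ => simp [Tm.Pure] at hpure

/-! ### Purity and β-steps under substitution -/

theorem pure_shift {M : Tm} (h : Tm.Pure M) (d c : ℕ) : Tm.Pure (Tm.shift d c M) := by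
  induction M generalizing c with
  | var n => by_cases h1 : n < c <;> simp [Tm.shift, Tm.Pure, h1]
  | lam M ihM => simp only [Tm.shift, Tm.Pure] at *; exact ihM h _
  | app M N ihM ihN =>
    simp only [Tm.shift, Tm.Pure] at *
    exact ⟨ihM h.1 _, ihN h.2 _⟩
  | star => simp [Tm.Pure] at h
  | guard _ _ _ _ => simp [Tm.Pure] at h
  | gen _ => simp [Tm.Pure] at h
  | verif _ _ _ => simp [Tm.Pure] at h

theorem pure_subst {M N : Tm} (hM : Tm.Pure M) (hN : Tm.Pure N) (k : ℕ) :
    Tm.Pure (Tm.subst k N M) := by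
  induction M generalizing N k with
  | var n =>
    by_cases h1 : n = k
    · simpa [Tm.subst, h1] using hN
    · by_cases h2 : k < n <;> simp [Tm.subst, h1, h2, Tm.Pure]
  | lam M ihM =>
    simp only [Tm.subst, Tm.Pure] at *
    exact ihM hM (pure_shift hN 1 0) _
  | app M N ihM ihN =>
    simp only [Tm.subst, Tm.Pure] at *
    exact ⟨ihM hM.1 hN _, ihN hM.2 hN _⟩
  | star => simp [Tm.Pure] at hM
  | guard _ _ _ _ => simp [Tm.Pure] at hM
  | gen _ => simp [Tm.Pure] at hM
  | verif _ _ _ => simp [Tm.Pure] at hM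

theorem bstep_pure {M N : Tm} (h : BStep M N) (hM : Tm.Pure M) : Tm.Pure N := by
  induction h with
  | beta M N =>
    simp only [Tm.Pure] at hM
    exact pure_subst hM.1 hM.2 0
  | lam _ ih => simp only [Tm.Pure] at *; exact ih hM
  | appL _ _ ih => simp only [Tm.Pure] at *; exact ⟨ih hM.1, hM.2⟩
  | appR _ _ ih => simp only [Tm.Pure] at *; exact ⟨hM.1, ih hM.2⟩
  | guardL _ _ _ => simp [Tm.Pure] at hM
  | guardR _ _ _ => simp [Tm.Pure] at hM
  | verif _ _ _ => simp [Tm.Pure] at hM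

theorem bsteps_pure {M N : Tm} (h : Relation.ReflTransGen BStep M N) (hM : Tm.Pure M) :
    Tm.Pure N := by
  induction h with
  | refl => exact hM
  | tail _ hs ih => exact bstep_pure hs ih

theorem bstep_substPar {M N : Tm} (h : BStep M N) (σ : ℕ → Tm) :
    Step (substPar σ M) (substPar σ N) := by
  induction h generalizing σ with
  | beta M N =>
    rw [Tm.substPar_subst]
    exact Step.beta _ _
  | lam _ ih => exact Step.lam (ih _)
  | appL _ _ ih => exact Step.appL _ (ih _)
  | appR _ _ ih => exact Step.appR _ (ih _)
  | guardL _ _ ih => exact Step.guardL _ (ih _)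
  | guardR _ _ ih => exact Step.guardR _ (ih _)
  | verif a _ ih => exact Step.verif a (ih _)

/-- Completeness: if M is a pure β-normalizing metaterm whose
β-normal form is M↓, and ⟨A⟩(M^Γ) ↠ ⋆, then Γ ⊢ M↓ : A. -/
theorem completeness {Γ : List Ty} {M Mnf : Tm} {A : Ty}
    (hpure : Tm.Pure M)
    (hred : Relation.ReflTransGen BStep M Mnf)
    (hnf : ∀ N, ¬ BStep Mnf N)
    (h : Relation.ReflTransGen Step (verifT A (substPar (genSub Γ) M)) Tm.star) :
    Typing Γ Mnf A := by
  have hs : SStep (substPar (genSub Γ) M) (substPar (genSub Γ) Mnf) :=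
    Relation.ReflTransGen.lift (substPar (genSub Γ)) (fun _ _ hab => bstep_substPar hab (genSub Γ)) _ _ hred
  have hv : SStep (verifT A (substPar (genSub Γ) M)) (verifT A (substPar (genSub Γ) Mnf)) := by
    rw [verifT_eq, verifT_eq]
    exact SStep.verif _ (apps_congL _ hs)
  obtain ⟨P, h1, h2⟩ := sstep_confluent h hv
  have hP : P = Tm.star := sstep_of_normal (fun _ => star_normal) h1
  subst hP
  exact (main_lemma (sizeOf Mnf) Mnf le_rfl (bsteps_pure hred hpure) hnf).2
    Γ (genSub Γ) A (good_genSub Γ) h2
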